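/- arXiv:2107.11325 — 6 statements merged into one kernel-verified Lean document; each statement's English description precedes it below -/
import Mathlib

section
/- Let k be a field of characteristic zero and n ≥ 1. With Rₙ = k[a₀,…,a_{n−1}, b₀,…,b_{n−1}]/(c₀,…,c_{n−1}), c_j = Σ_{i=0}^{j} a_i b_{j−i} (and R₀ = k), the k-algebra homomorphism R_{n−1}[λ] → Rₙ/(b₀) determined by a_i ↦ a_i for 0 ≤ i ≤ n−2, b_j ↦ b_{j+1} for 0 ≤ j ≤ n−2, and λ ↦ a_{n−1} is well defined and is an isomorphism. (This is the identification μ_{n−1}^{−1}(0) × 𝔸¹ ≅ Z ×_C 𝔸¹ₓ of Proposition 2.19, where Z = μₙ^{−1}(0) maps to C = Spec k[x,y]/(xy) via (a₀, b₀).) -/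
open MvPolynomial

set_option synthInstance.maxHeartbeats 1000000
set_option maxHeartbeats 2000000

/-- The `j`-th relation `c_j = ∑_{i=0}^{j} a_i b_{j−i}` cutting out the zero fiber of the
truncated multiplication map `μₙ`, where `a_i = X (Sum.inl i)`, `b_i = X (Sum.inr i)`. -/
noncomputable def truncMulCoord (k : Type) [Field k] (n : ℕ) (j : Fin n) :
    MvPolynomial (Fin n ⊕ Fin n) k :=
  ∑ i : Fin (j.1 + 1),
    (X (Sum.inl (Fin.castLE j.isLt i)) : MvPolynomial (Fin n ⊕ Fin n) k) *
      X (Sum.inr ⟨j.1 - i.1, lt_of_le_of_lt (Nat.sub_le _ _) j.isLt⟩)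

/-- `Rₙ = k[a₀,…,a_{n−1},b₀,…,b_{n−1}]/(c₀,…,c_{n−1})`, the coordinate ring of the zero
fiber `μₙ⁻¹(0)`.  (For `n = 0` this is `k`, matching the convention `R₀ = k`.) -/
noncomputable abbrev RFiber (k : Type) [Field k] (n : ℕ) : Type :=
  MvPolynomial (Fin n ⊕ Fin n) k ⧸ Ideal.span (Set.range (truncMulCoord k n))

/-- The generator `a_i` of `Rₙ`. -/
noncomputable def aR (k : Type) [Field k] (n : ℕ) (i : Fin n) : RFiber k n :=
  Ideal.Quotient.mk _ (X (Sum.inl i))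

/-- The generator `b_i` of `Rₙ`. -/
noncomputable def bR (k : Type) [Field k] (n : ℕ) (i : Fin n) : RFiber k n :=
  Ideal.Quotient.mk _ (X (Sum.inr i))

namespace RFiberIsoAux

variable (k : Type) [Field k]

/-- Totalized `aR`. -/
noncomputable def aT (n : ℕ) (v : ℕ) : RFiber k n :=
  if h : v < n then aR k n ⟨v, h⟩ else 0

/-- Totalized `bR`. -/
noncomputable def bT (n : ℕ) (v : ℕ) : RFiber k n :=
  if h : v < n then bR k n ⟨v, h⟩ else 0

lemma aT_eq (n v : ℕ) (h : v < n) : aT k n v = aR k n ⟨v, h⟩ := dif_pos h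

lemma bT_eq (n v : ℕ) (h : v < n) : bT k n v = bR k n ⟨v, h⟩ := dif_pos h

lemma rel (n : ℕ) (j : Fin n) :
    ∑ i : Fin (j.1 + 1),
      aR k n (Fin.castLE j.isLt i) *
        bR k n ⟨j.1 - i.1, lt_of_le_of_lt (Nat.sub_le _ _) j.isLt⟩ = 0 := by
  have h : (Ideal.Quotient.mk (Ideal.span (Set.range (truncMulCoord k n)))
      (truncMulCoord k n j)) = 0 :=
    Ideal.Quotient.eq_zero_iff_mem.mpr (Ideal.subset_span ⟨j, rfl⟩)
  rw [truncMulCoord, map_sum] at h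
  simpa [aR, bR] using h

lemma rel' (n jv : ℕ) (hj : jv < n) :
    ∑ i ∈ Finset.range (jv + 1), aT k n i * bT k n (jv - i) = 0 := by
  have h := rel k n ⟨jv, hj⟩
  rw [← Fin.sum_univ_eq_sum_range (fun i => aT k n i * bT k n (jv - i)) (jv + 1)]
  rw [← h]
  refine Finset.sum_congr rfl fun i _ => ?_
  congr 1
  · rw [aT_eq k n i.1 (lt_of_lt_of_le i.isLt hj)]
    rfl
  · rw [bT_eq k n (jv - i.1) (lt_of_le_of_lt (Nat.sub_le _ _) hj)]

variable (m : ℕ)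

noncomputable abbrev Qr : Type :=
  RFiber k (m+1) ⧸ Ideal.span {bR k (m+1) ⟨0, Nat.succ_pos m⟩}

noncomputable def mkQ : RFiber k (m+1) →ₐ[k] Qr k m := Ideal.Quotient.mkₐ k _

lemma mkQ_b0 : mkQ k m (bT k (m+1) 0) = 0 := by
  rw [bT_eq k (m+1) 0 (Nat.succ_pos m)]
  exact Ideal.Quotient.eq_zero_iff_mem.mpr (Ideal.mem_span_singleton_self _)

noncomputable def f0 : MvPolynomial (Fin m ⊕ Fin m) k →ₐ[k] Qr k m :=
  aeval (Sum.elim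
    (fun i : Fin m => mkQ k m (aT k (m+1) i.1))
    (fun i : Fin m => mkQ k m (bT k (m+1) (i.1 + 1))))

lemma f0_gen (j : Fin m) : f0 k m (truncMulCoord k m j) = 0 := by
  have hj : j.1 + 1 < m + 1 := by omega
  have h0 := congrArg (mkQ k m) (rel' k (m+1) (j.1+1) hj)
  simp only [map_sum, map_mul, map_zero] at h0
  rw [Finset.sum_range_succ, Nat.sub_self, show mkQ k m (aT k (m+1) (j.1+1)) * mkQ k m (bT k (m+1) 0) = 0 by
    rw [mkQ_b0]; exact mul_zero (M₀ := Qr k m) _, add_zero] at h0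
  rw [truncMulCoord]
  simp only [map_sum, map_mul, f0, aeval_X, Sum.elim_inl, Sum.elim_inr, Fin.coe_castLE]
  rw [Fin.sum_univ_eq_sum_range
    (fun v => mkQ k m (aT k (m+1) v) * mkQ k m (bT k (m+1) (j.1 - v + 1))) (j.1 + 1)]
  rw [← h0]
  refine Finset.sum_congr rfl fun i hi => ?_
  have : j.1 + 1 - i = j.1 - i + 1 := by
    have := Finset.mem_range.mp hi; omega
  rw [this]

/-- `a`-images for the reverse map. -/
noncomputable def ga (v : ℕ) : Polynomial (RFiber k m) :=
  if h : v < m then Polynomial.C (aR k m ⟨v, h⟩) else Polynomial.X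

/-- `b`-images for the reverse map. -/
noncomputable def gb (v : ℕ) : Polynomial (RFiber k m) :=
  if h : v - 1 < m ∧ 0 < v then Polynomial.C (bR k m ⟨v - 1, h.1⟩) else 0

noncomputable def g0 : MvPolynomial (Fin (m+1) ⊕ Fin (m+1)) k →ₐ[k] Polynomial (RFiber k m) :=
  aeval (Sum.elim
    (fun i : Fin (m+1) => ga k m i.1)
    (fun i : Fin (m+1) => gb k m i.1))

lemma ga_aT (v : ℕ) (hv : v < m) : ga k m v = Polynomial.C (aT k m v) := by
  rw [ga, dif_pos hv, aT_eq k m v hv]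

lemma gb_bT (v : ℕ) (hv : 0 < v) (hv2 : v < m + 1) :
    gb k m v = Polynomial.C (bT k m (v - 1)) := by
  have h : v - 1 < m ∧ 0 < v := ⟨by omega, hv⟩
  rw [gb, dif_pos h, bT_eq k m (v-1) h.1]

lemma g0_gen (j : Fin (m+1)) : g0 k m (truncMulCoord k (m+1) j) = 0 := by
  rw [truncMulCoord]
  simp only [map_sum, map_mul, g0, aeval_X, Sum.elim_inl, Sum.elim_inr, Fin.coe_castLE]
  rw [Fin.sum_univ_eq_sum_range (fun v => ga k m v * gb k m (j.1 - v)) (j.1 + 1)]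
  rw [Finset.sum_range_succ, Nat.sub_self]
  rw [show gb k m 0 = 0 from dif_neg (by omega), mul_zero, add_zero]
  have hcongr : ∀ i ∈ Finset.range j.1,
      ga k m i * gb k m (j.1 - i) =
        Polynomial.C (aT k m i) * Polynomial.C (bT k m (j.1 - 1 - i)) := by
    intro i hi
    have hi' := Finset.mem_range.mp hi
    have hjm := j.isLt
    rw [ga_aT k m i (by omega), gb_bT k m (j.1 - i) (by omega) (by omega)]
    rw [show j.1 - i - 1 = j.1 - 1 - i from by omega]
  rw [Finset.sum_congr rfl hcongr]
  by_cases hz : j.1 = 0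
  · rw [hz]; simp
  · obtain ⟨t, ht⟩ := Nat.exists_eq_succ_of_ne_zero hz
    have hrel := rel' k m t (by have := j.isLt; omega)
    rw [ht]
    simp only [Nat.succ_eq_add_one, Nat.add_sub_cancel]
    have hc : ∀ i ∈ Finset.range (t+1),
        Polynomial.C (aT k m i) * Polynomial.C (bT k m (t - i)) =
          Polynomial.C (aT k m i * bT k m (t - i)) :=
      fun i _ => (map_mul _ _ _).symm
    rw [Finset.sum_congr rfl hc, ← map_sum, hrel, map_zero]

lemma f0_span (a : MvPolynomial (Fin m ⊕ Fin m) k)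
    (ha : a ∈ Ideal.span (Set.range (truncMulCoord k m))) : f0 k m a = 0 := by
  have hle : Ideal.span (Set.range (truncMulCoord k m)) ≤
      RingHom.ker (f0 k m).toRingHom :=
    Ideal.span_le.mpr (by rintro _ ⟨j, rfl⟩; exact f0_gen k m j)
  exact hle ha

noncomputable def f1 : RFiber k m →ₐ[k] Qr k m :=
  Ideal.Quotient.liftₐ _ (f0 k m) (f0_span k m)

lemma f1_mk (p : MvPolynomial (Fin m ⊕ Fin m) k) :
    f1 k m (Ideal.Quotient.mk _ p) = f0 k m p := by
  rfl

noncomputable def psiA : Polynomial (RFiber k m) →ₐ[k] Qr k m :=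
  Polynomial.aevalTower (f1 k m) (mkQ k m (aT k (m+1) m))

lemma g0_span (a : MvPolynomial (Fin (m+1) ⊕ Fin (m+1)) k)
    (ha : a ∈ Ideal.span (Set.range (truncMulCoord k (m+1)))) : g0 k m a = 0 := by
  have hle : Ideal.span (Set.range (truncMulCoord k (m+1))) ≤
      RingHom.ker (g0 k m).toRingHom :=
    Ideal.span_le.mpr (by rintro _ ⟨j, rfl⟩; exact g0_gen k m j)
  exact hle ha

noncomputable def g1 : RFiber k (m+1) →ₐ[k] Polynomial (RFiber k m) :=
  Ideal.Quotient.liftₐ _ (g0 k m) (g0_span k m)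

lemma g1_mk (p : MvPolynomial (Fin (m+1) ⊕ Fin (m+1)) k) :
    g1 k m (Ideal.Quotient.mk _ p) = g0 k m p := by
  rfl

lemma g1_aR (v : Fin (m+1)) : g1 k m (aR k (m+1) v) = ga k m v.1 := by
  rw [aR, g1_mk]
  simp [g0]

lemma g1_bR (v : Fin (m+1)) : g1 k m (bR k (m+1) v) = gb k m v.1 := by
  rw [bR, g1_mk]
  simp [g0]

lemma g1_span (a : RFiber k (m+1))
    (ha : a ∈ Ideal.span {bR k (m+1) ⟨0, Nat.succ_pos m⟩}) : g1 k m a = 0 := by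
  have hle : Ideal.span {bR k (m+1) ⟨0, Nat.succ_pos m⟩} ≤
      RingHom.ker (g1 k m).toRingHom :=
    Ideal.span_le.mpr (by
      rintro _ rfl
      rw [SetLike.mem_coe, RingHom.mem_ker]
      rw [show (g1 k m).toRingHom (bR k (m+1) ⟨0, Nat.succ_pos m⟩)
          = g1 k m (bR k (m+1) ⟨0, Nat.succ_pos m⟩) from rfl, g1_bR]
      exact dif_neg (by simp))
  exact hle ha

noncomputable def gA : Qr k m →ₐ[k] Polynomial (RFiber k m) :=
  Ideal.Quotient.liftₐ _ (g1 k m) (g1_span k m)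

lemma gA_mk (x : RFiber k (m+1)) :
    gA k m (Ideal.Quotient.mk _ x) = g1 k m x := by
  rfl

lemma psiA_Ca (i : Fin m) :
    psiA k m (Polynomial.C (aR k m i)) =
      Ideal.Quotient.mk (Ideal.span {bR k (m+1) ⟨0, Nat.succ_pos m⟩})
        (aR k (m+1) ⟨i.1, by omega⟩) := by
  rw [psiA, Polynomial.aevalTower_C, aR, f1_mk]
  simp only [f0, aeval_X, Sum.elim_inl]
  rw [aT_eq k (m+1) i.1 (by omega), mkQ, Ideal.Quotient.mkₐ_eq_mk]

lemma psiA_Cb (j : Fin m) :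
    psiA k m (Polynomial.C (bR k m j)) =
      Ideal.Quotient.mk (Ideal.span {bR k (m+1) ⟨0, Nat.succ_pos m⟩})
        (bR k (m+1) ⟨j.1 + 1, by omega⟩) := by
  rw [psiA, Polynomial.aevalTower_C]
  have hb : bR k m j = Ideal.Quotient.mk
      (Ideal.span (Set.range (truncMulCoord k m))) (X (Sum.inr j)) := rfl
  rw [hb, f1_mk]
  simp only [f0, aeval_X, Sum.elim_inr]
  rw [bT_eq k (m+1) (j.1+1) (by omega), mkQ, Ideal.Quotient.mkₐ_eq_mk]

lemma psiA_X :
    psiA k m Polynomial.X =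
      Ideal.Quotient.mk (Ideal.span {bR k (m+1) ⟨0, Nat.succ_pos m⟩})
        (aR k (m+1) ⟨m, Nat.lt_succ_self m⟩) := by
  rw [psiA, Polynomial.aevalTower_X, aT_eq k (m+1) m (Nat.lt_succ_self m),
    mkQ, Ideal.Quotient.mkₐ_eq_mk]

lemma comp_g_psi : (gA k m).comp (psiA k m) = AlgHom.id k (Polynomial (RFiber k m)) := by
  apply Polynomial.algHom_ext'
  · apply Ideal.Quotient.algHom_ext
    apply MvPolynomial.algHom_ext
    rintro (i | i) <;>
      simp only [AlgHom.comp_apply, Ideal.Quotient.mkₐ_eq_mk, Polynomial.CAlgHom_apply,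
        AlgHom.id_apply]
    · rw [show (Ideal.Quotient.mk _ (X (Sum.inl i) : MvPolynomial (Fin m ⊕ Fin m) k)) =
        aR k m i from rfl, psiA_Ca, gA_mk, g1_aR]
      rw [ga, dif_pos i.isLt]
    · rw [show (Ideal.Quotient.mk _ (X (Sum.inr i) : MvPolynomial (Fin m ⊕ Fin m) k)) =
        bR k m i from rfl, psiA_Cb, gA_mk, g1_bR]
      have hc : (i.1 + 1 - 1 < m ∧ 0 < i.1 + 1) := ⟨by omega, by omega⟩
      rw [gb, dif_pos hc]
      exact congrArg _ (congrArg _ (Fin.ext (by simp)))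
  · rw [AlgHom.comp_apply, psiA_X, gA_mk, g1_aR, AlgHom.id_apply]
    exact dif_neg (by simp)

lemma comp_psi_g : (psiA k m).comp (gA k m) = AlgHom.id k (Qr k m) := by
  apply Ideal.Quotient.algHom_ext
  apply Ideal.Quotient.algHom_ext
  apply MvPolynomial.algHom_ext
  rintro (i | i) <;>
    simp only [AlgHom.comp_apply, Ideal.Quotient.mkₐ_eq_mk, AlgHom.id_apply]
  · rw [show (Ideal.Quotient.mk _ (X (Sum.inl i) : MvPolynomial (Fin (m+1) ⊕ Fin (m+1)) k)) =
      aR k (m+1) i from rfl, gA_mk, g1_aR]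
    by_cases h : i.1 < m
    · rw [ga, dif_pos h, psiA_Ca]
    · rw [ga, dif_neg h, psiA_X]
      have hi : i.1 = m := by have := i.isLt; omega
      congr 1
      congr 1
      exact Fin.ext (by simp [hi])
  · rw [show (Ideal.Quotient.mk _ (X (Sum.inr i) : MvPolynomial (Fin (m+1) ⊕ Fin (m+1)) k)) =
      bR k (m+1) i from rfl, gA_mk, g1_bR]
    by_cases h : 0 < i.1
    · have hc : (i.1 - 1 < m ∧ 0 < i.1) := ⟨by omega, h⟩
      rw [gb, dif_pos hc, psiA_Cb]
      congr 1
      congr 1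
      exact Fin.ext (by simp only [Fin.val_mk]; omega)
    · rw [gb, dif_neg (by omega), map_zero]
      have hi : (i : Fin (m+1)) = ⟨0, Nat.succ_pos m⟩ :=
        Fin.ext (by simp only [Fin.val_mk]; omega)
      rw [hi]
      exact (Ideal.Quotient.eq_zero_iff_mem.mpr (Ideal.mem_span_singleton_self _)).symm

end RFiberIsoAux

/-- the `k`-algebra homomorphism `R_{n−1}[λ] → Rₙ/(b₀)` determined by
`a_i ↦ a_i` for `0 ≤ i ≤ n−2`, `b_j ↦ b_{j+1}` for `0 ≤ j ≤ n−2`, and `λ ↦ a_{n−1}`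
is well defined (it exists) and is an isomorphism.  This is the identification
`μ_{n−1}⁻¹(0) × 𝔸¹ ≅ Z ×_C 𝔸¹ₓ` of Proposition 2.19. -/
theorem rFiber_quot_b0_iso (k : Type) [Field k] [CharZero k] (n : ℕ) (hn : 0 < n) :
    ∃ ψ : Polynomial (RFiber k (n - 1)) →ₐ[k]
        (RFiber k n ⧸ Ideal.span {bR k n ⟨0, hn⟩}),
      (∀ i : Fin (n - 1),
        ψ (Polynomial.C (aR k (n - 1) i)) =
          Ideal.Quotient.mk _ (aR k n (Fin.castLE (Nat.sub_le n 1) i))) ∧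
      (∀ j : Fin (n - 1),
        ψ (Polynomial.C (bR k (n - 1) j)) =
          Ideal.Quotient.mk _ (bR k n ⟨j.1 + 1, by have := j.isLt; omega⟩)) ∧
      ψ Polynomial.X =
        Ideal.Quotient.mk _ (aR k n ⟨n - 1, by omega⟩) ∧
      Function.Bijective ψ := by
  obtain ⟨m, rfl⟩ : ∃ m, n = m + 1 := ⟨n - 1, by omega⟩
  refine ⟨RFiberIsoAux.psiA k m,
    fun i => RFiberIsoAux.psiA_Ca k m i,
    fun j => RFiberIsoAux.psiA_Cb k m j,
    RFiberIsoAux.psiA_X k m,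
    Function.LeftInverse.injective
      (g := RFiberIsoAux.gA k m)
      (fun x => by exact AlgHom.congr_fun (RFiberIsoAux.comp_g_psi k m) x),
    Function.RightInverse.surjective
      (g := RFiberIsoAux.gA k m)
      (fun x => by exact AlgHom.congr_fun (RFiberIsoAux.comp_psi_g k m) x)⟩
end

section
/- Let k be a field of characteristic zero and n ≥ 1. The k-algebra homomorphism Aₙ/(bₙ) → A_{n−1} determined by a_i ↦ a_i for all i ≥ 0 and b_j ↦ b_j for 1 ≤ j ≤ n−1 is well defined and is an isomorphism; for n = 1 this gives A₁/(b₁) ≅ k[a₀]. (This is the identification Z^{≤n} ×_{C/𝔾ₘ} 𝔸¹/𝔾ₘ ≅ Z^{≤n−1} of Proposition 2.20(2).) -/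
open MvPolynomial

/-- The variable `a_l` for `l : ℤ`, with the convention `a_l = 0` for `l < 0`.
Here `a_i = X (Sum.inl i)`, and the variable `b_j` (for `1 ≤ j ≤ n`) is
`X (Sum.inr ⟨j−1⟩)`. -/
noncomputable def aVar (k : Type) [Field k] (n : ℕ) (l : ℤ) :
    MvPolynomial (ℕ ⊕ Fin n) k :=
  if 0 ≤ l then X (Sum.inl l.toNat) else 0

/-- The relation `r_m = ∑_{j=1}^{n} a_{m+j} b_j − (m+1) a_{m+1}` (with `a_l = 0` for
`l < 0`), for `m : ℤ`, `m ≥ −n`: equating coefficients of `t^m dt` in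
`∑ i a_i t^{i−1} dt = (∑ a_i t^i)·(∑_{j=1}^n b_j t^{−j} dt)`. -/
noncomputable def relA (k : Type) [Field k] (n : ℕ) (m : ℤ) :
    MvPolynomial (ℕ ⊕ Fin n) k :=
  (∑ j : Fin n, aVar k n (m + (j.1 + 1)) * X (Sum.inr j)) - (m + 1) • aVar k n (m + 1)

/-- `Aₙ`: the commutative `k`-algebra with generators `a₀, a₁, …` and `b₁, …, bₙ` and
relations `r_m = 0` for all integers `m ≥ −n`. -/
noncomputable abbrev AAlg (k : Type) [Field k] (n : ℕ) : Type :=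
  MvPolynomial (ℕ ⊕ Fin n) k ⧸
    Ideal.span (Set.range fun m : {m : ℤ // -(n : ℤ) ≤ m} => relA k n m.1)

/-- The generator `a_i` of `Aₙ`. -/
noncomputable def aA (k : Type) [Field k] (n : ℕ) (i : ℕ) : AAlg k n :=
  Ideal.Quotient.mk _ (X (Sum.inl i))

/-- The generator `b_{j+1}` of `Aₙ` (for `j : Fin n`). -/
noncomputable def bA (k : Type) [Field k] (n : ℕ) (j : Fin n) : AAlg k n :=
  Ideal.Quotient.mk _ (X (Sum.inr j))

lemma aVar_neg (k : Type) [Field k] (n : ℕ) (l : ℤ) (h : l < 0) : aVar k n l = 0 :=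
  if_neg (not_le.mpr h)

lemma relA_eq_zero (k : Type) [Field k] (n : ℕ) (m : ℤ) (h : m + n < 0) : relA k n m = 0 := by
  unfold relA
  rw [Finset.sum_congr rfl (fun j _ => by
    rw [aVar_neg k n _ (by have := j.2; omega), zero_mul]), Finset.sum_const_zero]
  rcases lt_or_eq_of_le (show m + 1 ≤ 0 by omega) with h1 | h1
  · rw [aVar_neg k n _ h1, smul_zero, sub_zero]
  · rw [h1, zero_smul, sub_zero]

lemma mk_relA (k : Type) [Field k] (n : ℕ) (m : ℤ) (h : -(n:ℤ) ≤ m) :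
    Ideal.Quotient.mk (Ideal.span (Set.range fun m : {m : ℤ // -(n : ℤ) ≤ m} => relA k n m.1))
      (relA k n m) = 0 := by
  rw [Ideal.Quotient.eq_zero_iff_mem]
  exact Ideal.subset_span ⟨⟨m, h⟩, rfl⟩

/-- forward: MvPoly on n'+1 vars → A_{n'}, sending b_{n'+1} to 0. -/
noncomputable def fwdAux (k : Type) [Field k] (n' : ℕ) :
    MvPolynomial (ℕ ⊕ Fin (n' + 1)) k →ₐ[k] AAlg k n' :=
  aeval (fun s => match s with
    | Sum.inl i => aA k n' i
    | Sum.inr j => if h : j.1 < n' then bA k n' ⟨j.1, h⟩ else 0)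

lemma fwdAux_aVar (k : Type) [Field k] (n' : ℕ) (l : ℤ) :
    fwdAux k n' (aVar k (n' + 1) l) = Ideal.Quotient.mk _ (aVar k n' l) := by
  unfold aVar fwdAux aA
  split <;> simp

lemma fwdAux_relA (k : Type) [Field k] (n' : ℕ) (m : ℤ) :
    fwdAux k n' (relA k (n' + 1) m) = Ideal.Quotient.mk _ (relA k n' m) := by
  rw [relA.eq_1 k (n' + 1) m, relA.eq_1 k n' m]
  rw [map_sub, map_sum, map_zsmul, fwdAux_aVar]
  rw [Fin.sum_univ_castSucc]
  have hlast : fwdAux k n' (aVar k (n' + 1) (m + ((Fin.last n').1 + 1)) * X (Sum.inr (Fin.last n'))) = 0 := by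
    rw [map_mul]
    have : fwdAux k n' (X (Sum.inr (Fin.last n')) : MvPolynomial (ℕ ⊕ Fin (n'+1)) k) = 0 := by
      unfold fwdAux
      rw [aeval_X]
      exact dif_neg (by simp [Fin.last])
    rw [this, mul_zero]
  rw [hlast, add_zero, map_sub, map_sum, map_zsmul]
  have hterm : ∀ j : Fin n',
      fwdAux k n' (aVar k (n' + 1) (m + ((j.castSucc).1 + 1)) * X (Sum.inr j.castSucc)) =
        Ideal.Quotient.mk _ (aVar k n' (m + (j.1 + 1)) * X (Sum.inr j)) := by
    intro j
    rw [map_mul, fwdAux_aVar]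
    have hx : fwdAux k n' (X (Sum.inr j.castSucc) : MvPolynomial (ℕ ⊕ Fin (n'+1)) k) = bA k n' j := by
      unfold fwdAux
      rw [aeval_X]
      exact dif_pos j.2
    rw [hx, bA, ← map_mul]
    rfl
  rw [Finset.sum_congr rfl (fun j _ => hterm j)]

noncomputable def phiA (k : Type) [Field k] (n' : ℕ) : AAlg k (n' + 1) →ₐ[k] AAlg k n' :=
  Ideal.Quotient.liftₐ _ (fwdAux k n') (by
    intro a ha
    refine (Ideal.span_le.mpr ?_ : _ ≤ RingHom.ker (fwdAux k n').toRingHom) ha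
    rintro _ ⟨m, rfl⟩
    rw [SetLike.mem_coe, RingHom.mem_ker]
    show fwdAux k n' (relA k (n' + 1) m.1) = 0
    rw [fwdAux_relA]
    rcases le_or_gt (-(n' : ℤ)) m.1 with h | h
    · exact mk_relA k n' m.1 h
    · rw [relA_eq_zero k n' m.1 (by omega), map_zero])

lemma phiA_mk (k : Type) [Field k] (n' : ℕ) (x : MvPolynomial (ℕ ⊕ Fin (n' + 1)) k) :
    phiA k n' (Ideal.Quotient.mk _ x) = fwdAux k n' x := rfl

noncomputable abbrev QA (k : Type) [Field k] (n' : ℕ) : Type :=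
  AAlg k (n' + 1) ⧸ Ideal.span {bA k (n' + 1) (Fin.last n')}

noncomputable def mkQ (k : Type) [Field k] (n' : ℕ) :
    MvPolynomial (ℕ ⊕ Fin (n' + 1)) k →ₐ[k] QA k n' :=
  (Ideal.Quotient.mkₐ k _).comp (Ideal.Quotient.mkₐ k _)

lemma mkQ_b_last (k : Type) [Field k] (n' : ℕ) :
    mkQ k n' (X (Sum.inr (Fin.last n'))) = 0 := by
  show Ideal.Quotient.mk _ (bA k (n' + 1) (Fin.last n')) = 0
  rw [Ideal.Quotient.eq_zero_iff_mem]
  exact Ideal.subset_span rfl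

lemma mkQ_relA (k : Type) [Field k] (n' : ℕ) (m : ℤ) (h : -((n' : ℤ) + 1) ≤ m) :
    mkQ k n' (relA k (n' + 1) m) = 0 := by
  show Ideal.Quotient.mk _ (Ideal.Quotient.mk _ (relA k (n' + 1) m)) = 0
  rw [mk_relA k (n' + 1) m (by push_cast; omega), map_zero]

noncomputable def psiA (k : Type) [Field k] (n' : ℕ) : QA k n' →ₐ[k] AAlg k n' :=
  Ideal.Quotient.liftₐ _ (phiA k n') (by
    intro a ha
    refine (Ideal.span_le.mpr ?_ : _ ≤ RingHom.ker (phiA k n').toRingHom) ha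
    rintro x hx
    rw [Set.mem_singleton_iff] at hx
    subst hx
    rw [SetLike.mem_coe, RingHom.mem_ker]
    show phiA k n' (bA k (n' + 1) (Fin.last n')) = 0
    rw [bA, phiA_mk]
    show fwdAux k n' (X (Sum.inr (Fin.last n'))) = 0
    unfold fwdAux
    rw [aeval_X]
    exact dif_neg (by simp [Fin.last]))

lemma psiA_mkQ (k : Type) [Field k] (n' : ℕ) (x : MvPolynomial (ℕ ⊕ Fin (n' + 1)) k) :
    psiA k n' (mkQ k n' x) = fwdAux k n' x := rfl

/-- backward on polynomials -/
noncomputable def bwdAux (k : Type) [Field k] (n' : ℕ) :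
    MvPolynomial (ℕ ⊕ Fin n') k →ₐ[k] QA k n' :=
  aeval (fun (s : ℕ ⊕ Fin n') => match s with
    | Sum.inl i => mkQ k n' (X (Sum.inl i))
    | Sum.inr j => mkQ k n' (X (Sum.inr j.castSucc)))

lemma bwdAux_aVar (k : Type) [Field k] (n' : ℕ) (l : ℤ) :
    bwdAux k n' (aVar k n' l) = mkQ k n' (aVar k (n' + 1) l) := by
  unfold aVar bwdAux
  split <;> simp

lemma bwdAux_relA (k : Type) [Field k] (n' : ℕ) (m : ℤ) (h : -(n' : ℤ) ≤ m) :
    bwdAux k n' (relA k n' m) = 0 := by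
  rw [relA.eq_1 k n' m]
  rw [map_sub, map_sum, map_zsmul, bwdAux_aVar]
  have hterm : ∀ j : Fin n',
      bwdAux k n' (aVar k n' (m + (j.1 + 1)) * X (Sum.inr j)) =
        mkQ k n' (aVar k (n' + 1) (m + ((j.castSucc).1 + 1)) * X (Sum.inr j.castSucc)) := by
    intro j
    rw [map_mul, bwdAux_aVar]
    have hx : bwdAux k n' (X (Sum.inr j) : MvPolynomial (ℕ ⊕ Fin n') k) =
        mkQ k n' (X (Sum.inr j.castSucc)) := by
      unfold bwdAux; rw [aeval_X]
    rw [hx, ← map_mul]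
    rfl
  rw [Finset.sum_congr rfl (fun j _ => hterm j)]
  have : ∑ j : Fin n', mkQ k n' (aVar k (n' + 1) (m + ((j.castSucc).1 + 1)) * X (Sum.inr j.castSucc))
      = mkQ k n' (relA k (n' + 1) m) - mkQ k n' (aVar k (n' + 1) (m + ((Fin.last n').1 + 1)) * X (Sum.inr (Fin.last n'))) + (m + 1) • mkQ k n' (aVar k (n' + 1) (m + 1)) := by
    rw [relA, map_sub, map_sum, map_zsmul, Fin.sum_univ_castSucc]
    abel
  rw [this]
  have hq : ∀ p : MvPolynomial (ℕ ⊕ Fin (n' + 1)) k, mkQ k n' (p * X (Sum.inr (Fin.last n'))) = 0 :=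
    fun p => by rw [map_mul, mkQ_b_last]; exact mul_zero (mkQ k n' p)
  rw [mkQ_relA k n' m (by omega), hq]
  abel

noncomputable def psiInv (k : Type) [Field k] (n' : ℕ) : AAlg k n' →ₐ[k] QA k n' :=
  Ideal.Quotient.liftₐ _ (bwdAux k n') (by
    intro a ha
    refine (Ideal.span_le.mpr ?_ : _ ≤ RingHom.ker (bwdAux k n').toRingHom) ha
    rintro _ ⟨m, rfl⟩
    rw [SetLike.mem_coe, RingHom.mem_ker]
    exact bwdAux_relA k n' m.1 m.2)

lemma psiInv_mk (k : Type) [Field k] (n' : ℕ) (x : MvPolynomial (ℕ ⊕ Fin n') k) :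
    psiInv k n' (Ideal.Quotient.mk _ x) = bwdAux k n' x := rfl

lemma comp_one (k : Type) [Field k] (n' : ℕ) :
    (psiA k n').comp (psiInv k n') = AlgHom.id k (AAlg k n') := by
  apply Ideal.Quotient.algHom_ext
  apply MvPolynomial.algHom_ext
  rintro (i | j)
  · show psiA k n' (psiInv k n' (Ideal.Quotient.mk _ (X (Sum.inl i)))) = Ideal.Quotient.mk _ (X (Sum.inl i))
    rw [psiInv_mk]
    show psiA k n' (bwdAux k n' (X (Sum.inl i))) = _
    unfold bwdAux
    rw [aeval_X]
    show fwdAux k n' (X (Sum.inl i)) = _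
    unfold fwdAux
    rw [aeval_X]
    rfl
  · show psiA k n' (psiInv k n' (Ideal.Quotient.mk _ (X (Sum.inr j)))) = Ideal.Quotient.mk _ (X (Sum.inr j))
    rw [psiInv_mk]
    show psiA k n' (bwdAux k n' (X (Sum.inr j))) = _
    unfold bwdAux
    rw [aeval_X]
    show fwdAux k n' (X (Sum.inr j.castSucc)) = _
    unfold fwdAux
    rw [aeval_X]
    show (if h : j.1 < n' then bA k n' ⟨j.1, h⟩ else 0) = _
    rw [dif_pos j.2]
    exact congrArg (bA k n') (Fin.ext rfl)

lemma comp_two (k : Type) [Field k] (n' : ℕ) :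
    (psiInv k n').comp (psiA k n') = AlgHom.id k (QA k n') := by
  apply Ideal.Quotient.algHom_ext
  apply Ideal.Quotient.algHom_ext
  apply MvPolynomial.algHom_ext
  rintro (i | j)
  · show psiInv k n' (psiA k n' (mkQ k n' (X (Sum.inl i)))) = mkQ k n' (X (Sum.inl i))
    rw [psiA_mkQ]
    show psiInv k n' (fwdAux k n' (X (Sum.inl i))) = _
    unfold fwdAux
    rw [aeval_X]
    show psiInv k n' (Ideal.Quotient.mk _ (X (Sum.inl i))) = _
    rw [psiInv_mk]
    show bwdAux k n' (X (Sum.inl i)) = _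
    unfold bwdAux
    rw [aeval_X]
  · show psiInv k n' (psiA k n' (mkQ k n' (X (Sum.inr j)))) = mkQ k n' (X (Sum.inr j))
    rw [psiA_mkQ]
    show psiInv k n' (fwdAux k n' (X (Sum.inr j))) = _
    unfold fwdAux
    rw [aeval_X]
    show psiInv k n' (if h : j.1 < n' then bA k n' ⟨j.1, h⟩ else 0) = _
    by_cases h : j.1 < n'
    · rw [dif_pos h]
      show psiInv k n' (Ideal.Quotient.mk _ (X (Sum.inr ⟨j.1, h⟩))) = _
      rw [psiInv_mk]
      show bwdAux k n' (X (Sum.inr ⟨j.1, h⟩)) = _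
      unfold bwdAux
      rw [aeval_X]
      exact congrArg (mkQ k n') (congrArg X (congrArg Sum.inr (Fin.ext rfl)))
    · rw [dif_neg h, map_zero]
      have hj : j = Fin.last n' := Fin.ext (by rw [Fin.val_last]; have := j.2; omega)
      rw [hj, mkQ_b_last]


/-- the `k`-algebra homomorphism `Aₙ/(bₙ) → A_{n−1}` determined by
`a_i ↦ a_i` for all `i ≥ 0` and `b_j ↦ b_j` for `1 ≤ j ≤ n−1` is well defined (it exists)
and is an isomorphism.  (For `n = 1` this gives `A₁/(b₁) ≅ k[a₀]`.)  This is the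
identification `Z^{≤n} ×_{C/𝔾ₘ} 𝔸¹/𝔾ₘ ≅ Z^{≤n−1}` of Proposition 2.20(2). -/
theorem aAlg_quot_bn_iso (k : Type) [Field k] [CharZero k] (n : ℕ) (hn : 1 ≤ n) :
    ∃ ψ : (AAlg k n ⧸ Ideal.span {bA k n ⟨n - 1, by omega⟩}) →ₐ[k] AAlg k (n - 1),
      (∀ i : ℕ, ψ (Ideal.Quotient.mk _ (aA k n i)) = aA k (n - 1) i) ∧
      (∀ j : Fin (n - 1),
        ψ (Ideal.Quotient.mk _ (bA k n (Fin.castLE (Nat.sub_le n 1) j))) = bA k (n - 1) j) ∧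
      Function.Bijective ψ := by
  obtain ⟨n', rfl⟩ : ∃ n', n = n' + 1 := ⟨n - 1, by omega⟩
  refine ⟨psiA k n', ?_, ?_, ?_⟩
  · intro i
    show psiA k n' (mkQ k n' (X (Sum.inl i))) = aA k n' i
    rw [psiA_mkQ]
    show fwdAux k n' (X (Sum.inl i)) = _
    unfold fwdAux
    rw [aeval_X]
  · intro j
    show psiA k n' (mkQ k n' (X (Sum.inr (Fin.castLE (Nat.sub_le (n' + 1) 1) j)))) = bA k n' j
    rw [psiA_mkQ]
    show fwdAux k n' (X (Sum.inr (Fin.castLE (Nat.sub_le (n' + 1) 1) j))) = _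
    unfold fwdAux
    rw [aeval_X]
    show (if h : j.1 < n' then bA k n' ⟨j.1, h⟩ else 0) = _
    rw [dif_pos (show j.1 < n' from j.2)]
    exact congrArg (bA k n') (Fin.ext rfl)
  · have h1 : ∀ x, psiInv k n' (psiA k n' x) = x := fun x => by
      rw [← AlgHom.comp_apply, comp_two]; rfl
    have h2 : ∀ y, psiA k n' (psiInv k n' y) = y := fun y => by
      rw [← AlgHom.comp_apply, comp_one]; rfl
    exact ⟨Function.LeftInverse.injective h1, Function.RightInverse.surjective h2⟩
end

section
/- Let k be a field of characteristic zero and n ≥ 2. In the localization Aₙ[bₙ^{−1}] of Aₙ away from bₙ, the image of every generator a_i (i ≥ 0) is zero, and the natural k-algebra map from the localization k[b₁,…,bₙ][bₙ^{−1}] of the polynomial ring k[b₁,…,bₙ] away from bₙ to Aₙ[bₙ^{−1}] is an isomorphism. (This identifies the open locus Uₙ = Z^{≤n} ∖ Z^{≤n−1} with (𝔸¹∖0) × 𝔸^{n−1} × B𝔾ₘ, Lemma 2.26.) -/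
open MvPolynomial

/-- The natural `k`-algebra map `k[b₁,…,bₙ] → Aₙ`, `b_j ↦ b_j` (the variable indexed by
`j : Fin n` denotes `b_{j+1}`). -/
noncomputable def bPolyToA (k : Type) [Field k] (n : ℕ) :
    MvPolynomial (Fin n) k →+* AAlg k n :=
  (aeval (bA k n)).toRingHom

set_option maxHeartbeats 1000000
set_option synthInstance.maxHeartbeats 400000

namespace AAlgAux

variable (k : Type) [Field k] [CharZero k] (n : ℕ)

theorem mk_relA (m : ℤ) (hm : -(n : ℤ) ≤ m) :
    (Ideal.Quotient.mk _ (relA k n m) : AAlg k n) = 0 := by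
  rw [Ideal.Quotient.eq_zero_iff_mem]
  exact Ideal.subset_span ⟨⟨m, hm⟩, rfl⟩

theorem bPolyToA_X (j : Fin n) : bPolyToA k n (X j) = bA k n j := by
  simp [bPolyToA]

theorem gen_zero {L : Type} [CommRing L] (hn : 2 ≤ n)
    (F : MvPolynomial (ℕ ⊕ Fin n) k →+* L)
    (hrel : ∀ m : ℤ, -(n : ℤ) ≤ m → F (relA k n m) = 0)
    (hunit : IsUnit (F (X (Sum.inr ⟨n - 1, Nat.sub_one_lt (by omega)⟩)))) (i : ℕ) :
    F (X (Sum.inl i)) = 0 := by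
  induction i using Nat.strong_induction_on with
  | _ i IH =>
    set j₀ : Fin n := ⟨n - 1, by omega⟩ with hj₀
    have hF : ∀ l : ℤ, l < i → F (aVar k n l) = 0 := by
      intro l hl
      unfold aVar
      split_ifs with h
      · exact IH l.toNat (by omega)
      · simp
    have hr : F (relA k n ((i : ℤ) - n)) = 0 := hrel _ (by omega)
    have hsm : F ((((i : ℤ) - n) + 1) • aVar k n (((i : ℤ) - n) + 1)) = 0 := by
      rw [zsmul_eq_mul, map_mul, hF _ (by omega), mul_zero]
    rw [relA, map_sub, sub_eq_zero, map_sum, hsm,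
      Finset.sum_eq_single_of_mem j₀ (Finset.mem_univ _) ?side] at hr
    case side =>
      intro j _ hj
      have hjlt : j.1 < n - 1 := by
        rcases lt_or_ge j.1 (n - 1) with h | h
        · exact h
        · exfalso; apply hj; apply Fin.ext; simp only [hj₀]; omega
      rw [map_mul, hF _ (by push_cast; omega), zero_mul]
    have hidx : ((i : ℤ) - n) + ((j₀ : Fin n).1 + 1) = (i : ℤ) := by
      simp only [hj₀]; push_cast; omega
    rw [hidx] at hr
    have havar : aVar k n (i : ℤ) = X (Sum.inl i) := by simp [aVar]
    rw [havar, map_mul] at hr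
    exact (hunit.mul_left_eq_zero).mp hr

theorem aA_loc_zero (hn : 2 ≤ n) (i : ℕ) :
    algebraMap (AAlg k n)
      (Localization.Away (bPolyToA k n (X ⟨n - 1, Nat.sub_one_lt (by omega)⟩))) (aA k n i) = 0 := by
  set j₀ : Fin n := ⟨n - 1, by omega⟩ with hj₀
  set F : MvPolynomial (ℕ ⊕ Fin n) k →+* (Localization.Away (bPolyToA k n (X j₀))) :=
    (algebraMap (AAlg k n) (Localization.Away (bPolyToA k n (X j₀)))).comp
      (Ideal.Quotient.mk _) with hFdef
  have hrel : ∀ m : ℤ, -(n : ℤ) ≤ m → F (relA k n m) = 0 := by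
    intro m hm
    have h0 := mk_relA k n m hm
    have := congrArg (algebraMap (AAlg k n) (Localization.Away (bPolyToA k n (X j₀)))) h0
    simpa [hFdef] using this
  have hunit : IsUnit (F (X (Sum.inr j₀))) := by
    have heq : F (X (Sum.inr j₀))
        = algebraMap (AAlg k n) (Localization.Away (bPolyToA k n (X j₀)))
            (bPolyToA k n (X j₀)) := by
      simp [hFdef, bPolyToA_X, bA]
    rw [heq]
    exact IsLocalization.Away.algebraMap_isUnit
      (S := Localization.Away (bPolyToA k n (X j₀))) (bPolyToA k n (X j₀))
  simpa [hFdef, aA] using gen_zero k n hn F hrel hunit i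


noncomputable def psi0 (j₀ : Fin n) :
    MvPolynomial (ℕ ⊕ Fin n) k →+*
      Localization.Away (X j₀ : MvPolynomial (Fin n) k) :=
  eval₂Hom ((algebraMap (MvPolynomial (Fin n) k)
      (Localization.Away (X j₀ : MvPolynomial (Fin n) k))).comp C)
    (Sum.elim (fun _ => 0)
      fun j => algebraMap (MvPolynomial (Fin n) k) _ (X j))

theorem psi0_aVar (j₀ : Fin n) (l : ℤ) : psi0 k n j₀ (aVar k n l) = 0 := by
  unfold aVar
  split_ifs with h <;> simp [psi0]

theorem psi0_relA (j₀ : Fin n) (m : ℤ) : psi0 k n j₀ (relA k n m) = 0 := by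
  rw [relA, map_sub, map_sum, zsmul_eq_mul, map_mul, psi0_aVar, mul_zero, sub_zero]
  refine Finset.sum_eq_zero fun j _ => ?_
  rw [map_mul, psi0_aVar, zero_mul]

noncomputable def psi (j₀ : Fin n) :
    AAlg k n →+* Localization.Away (X j₀ : MvPolynomial (Fin n) k) :=
  Ideal.Quotient.lift _ (psi0 k n j₀) (by
    intro a ha
    have hle : Ideal.span (Set.range fun m : {m : ℤ // -(n : ℤ) ≤ m} => relA k n m.1)
        ≤ RingHom.ker (psi0 k n j₀) := by
      rw [Ideal.span_le]
      rintro _ ⟨m, rfl⟩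
      simp only [SetLike.mem_coe, RingHom.mem_ker]
      exact psi0_relA k n j₀ m.1
    exact RingHom.mem_ker.mp (hle ha))

theorem awayMap_algebraMap {R P : Type} [CommRing R] [CommRing P]
    (f : R →+* P) (r : R) (x : R) :
    Localization.awayMap f r (algebraMap R (Localization.Away r) x)
      = algebraMap P (Localization.Away (f r)) (f x) :=
  IsLocalization.map_eq _ _

theorem psi_comp_bPolyToA (j₀ : Fin n) :
    (psi k n j₀).comp (bPolyToA k n)
      = algebraMap (MvPolynomial (Fin n) k)
          (Localization.Away (X j₀ : MvPolynomial (Fin n) k)) := by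
  apply MvPolynomial.ringHom_ext
  · intro a
    simp [psi, psi0, bPolyToA, ← Ideal.Quotient.mk_algebraMap, MvPolynomial.algebraMap_eq]
  · intro j
    simp [psi, psi0, bPolyToA, bA]

end AAlgAux


/-- for `n ≥ 2`, in `Aₙ[bₙ⁻¹]` the image of every generator `a_i` is zero,
and the natural map `k[b₁,…,bₙ][bₙ⁻¹] → Aₙ[bₙ⁻¹]` is an isomorphism. -/
theorem aAlg_localization_bn (k : Type) [Field k] [CharZero k] (n : ℕ) (hn : 2 ≤ n) :
    (∀ i : ℕ,
      algebraMap (AAlg k n)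
        (Localization.Away (bPolyToA k n (X ⟨n - 1, by omega⟩))) (aA k n i) = 0) ∧
    Function.Bijective
      (Localization.awayMap (bPolyToA k n) (X ⟨n - 1, by omega⟩) :
        Localization.Away (X ⟨n - 1, by omega⟩ : MvPolynomial (Fin n) k) →+*
          Localization.Away (bPolyToA k n (X ⟨n - 1, by omega⟩))) := by
  constructor
  · exact AAlgAux.aA_loc_zero k n hn
  · set j₀ : Fin n := ⟨n - 1, by omega⟩ with hj₀
    have hunit : IsUnit ((AAlgAux.psi k n j₀) (bPolyToA k n (X j₀))) := by
      have heq : (AAlgAux.psi k n j₀) (bPolyToA k n (X j₀))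
          = algebraMap (MvPolynomial (Fin n) k)
              (Localization.Away (X j₀ : MvPolynomial (Fin n) k)) (X j₀) :=
        RingHom.congr_fun (AAlgAux.psi_comp_bPolyToA k n j₀) (X j₀)
      rw [heq]
      exact IsLocalization.Away.algebraMap_isUnit _
    set Ψ := Localization.awayLift (AAlgAux.psi k n j₀) (bPolyToA k n (X j₀)) hunit with hΨ
    have h1 : Ψ.comp (Localization.awayMap (bPolyToA k n) (X j₀)) = RingHom.id _ := by
      refine IsLocalization.ringHom_ext (Submonoid.powers (X j₀ : MvPolynomial (Fin n) k))
        (RingHom.ext fun x => ?_)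
      simp only [RingHom.comp_apply, RingHom.id_apply]
      rw [AAlgAux.awayMap_algebraMap, IsLocalization.Away.lift_eq]
      exact RingHom.congr_fun (AAlgAux.psi_comp_bPolyToA k n j₀) x
    have hΨa : Ψ.comp (algebraMap (AAlg k n)
        (Localization.Away (bPolyToA k n (X j₀)))) = AAlgAux.psi k n j₀ :=
      IsLocalization.Away.lift_comp _ _
    have h2 : (Localization.awayMap (bPolyToA k n) (X j₀)).comp Ψ = RingHom.id _ := by
      have hcomp : ((Localization.awayMap (bPolyToA k n) (X j₀)).comp Ψ).comp
            (algebraMap (AAlg k n) (Localization.Away (bPolyToA k n (X j₀))))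
          = (RingHom.id _).comp
            (algebraMap (AAlg k n) (Localization.Away (bPolyToA k n (X j₀)))) := by
        rw [RingHom.comp_assoc, RingHom.id_comp, hΨa]
        apply Ideal.Quotient.ringHom_ext
        apply MvPolynomial.ringHom_ext
        · intro a
          simp only [RingHom.comp_apply, AAlgAux.psi, Ideal.Quotient.lift_mk]
          rw [show (AAlgAux.psi0 k n j₀) (C a)
              = algebraMap (MvPolynomial (Fin n) k)
                  (Localization.Away (X j₀ : MvPolynomial (Fin n) k)) (C a) by
            simp [AAlgAux.psi0]]
          rw [AAlgAux.awayMap_algebraMap]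
          congr 1
          simp [bPolyToA, ← Ideal.Quotient.mk_algebraMap, MvPolynomial.algebraMap_eq]
        · intro s
          cases s with
          | inl i =>
            simp only [RingHom.comp_apply, AAlgAux.psi, Ideal.Quotient.lift_mk]
            rw [show (AAlgAux.psi0 k n j₀) (X (Sum.inl i)) = 0 by simp [AAlgAux.psi0]]
            rw [map_zero]
            exact (AAlgAux.aA_loc_zero k n hn i).symm
          | inr j =>
            simp only [RingHom.comp_apply, AAlgAux.psi, Ideal.Quotient.lift_mk]
            rw [show (AAlgAux.psi0 k n j₀) (X (Sum.inr j))
                = algebraMap (MvPolynomial (Fin n) k)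
                    (Localization.Away (X j₀ : MvPolynomial (Fin n) k)) (X j) by
              simp [AAlgAux.psi0]]
            rw [AAlgAux.awayMap_algebraMap]
            congr 1
            simp [bPolyToA, bA]
      exact IsLocalization.ringHom_ext (S := Localization.Away (bPolyToA k n (X j₀))) (P := Localization.Away (bPolyToA k n (X j₀))) (Submonoid.powers (bPolyToA k n (X j₀))) hcomp
    constructor
    · exact Function.LeftInverse.injective (g := Ψ) fun x => RingHom.congr_fun h1 x
    · exact Function.RightInverse.surjective (g := Ψ) fun x => RingHom.congr_fun h2 x
end

section
/- Let k be a field of characteristic zero and let A₁ = k[b, a₀, a₁, a₂, …]/((b − i)·a_i : i ∈ ℕ). Let S ⊂ A₁ be the multiplicative set generated by the elements {b − m : m ∈ ℕ} (including m = 0). Then in the localization S^{−1}A₁ the image of every a_i is zero, and the natural k-algebra map from the localization of the polynomial ring k[b] at the multiplicative set generated by {b − m : m ∈ ℕ} to S^{−1}A₁ is an isomorphism. (This identifies the pro-open locus U₁ ⊂ Z^{≤1} with (𝔸¹ ∖ ℤ^{≥0}) × B𝔾ₘ, Lemma 2.27.) -/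
open MvPolynomial

/-- `A₁ = k[b, a₀, a₁, a₂, …]/((b − i)·a_i : i ∈ ℕ)`.  Here `b = X (Sum.inl ())` and
`a_i = X (Sum.inr i)`. -/
noncomputable abbrev AOne (k : Type) [Field k] : Type :=
  MvPolynomial (Unit ⊕ ℕ) k ⧸
    Ideal.span (Set.range fun i : ℕ =>
      (X (Sum.inl ()) - (i : MvPolynomial (Unit ⊕ ℕ) k)) * X (Sum.inr i))

/-- The generator `b` of `A₁`. -/
noncomputable def bOne (k : Type) [Field k] : AOne k :=
  Ideal.Quotient.mk _ (X (Sum.inl ()))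

/-- The generator `a_i` of `A₁`. -/
noncomputable def aOne (k : Type) [Field k] (i : ℕ) : AOne k :=
  Ideal.Quotient.mk _ (X (Sum.inr i))

/-- The multiplicative set `S ⊂ A₁` generated by the elements `b − m`, `m ∈ ℕ`. -/
noncomputable abbrev SOne (k : Type) [Field k] : Submonoid (AOne k) :=
  Submonoid.closure (Set.range fun m : ℕ => bOne k - (m : AOne k))

/-- The multiplicative set of `k[b]` generated by the elements `b − m`, `m ∈ ℕ`. -/
noncomputable abbrev SPoly (k : Type) [Field k] : Submonoid (Polynomial k) :=
  Submonoid.closure (Set.range fun m : ℕ => Polynomial.X - (m : Polynomial k))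

/-- The natural map `k[b] → A₁`, `b ↦ b`. -/
noncomputable def polyToAOne (k : Type) [Field k] : Polynomial k →+* AOne k :=
  (Polynomial.aeval (bOne k)).toRingHom

-- Auxiliary definitions and lemmas

/-- The algebra map `k[b, a₀, a₁, …] → S⁻¹k[b]` sending `b ↦ b` and `a_i ↦ 0`. -/
noncomputable def phiOne (k : Type) [Field k] :
    MvPolynomial (Unit ⊕ ℕ) k →ₐ[k] Localization (SPoly k) :=
  aeval (Sum.elim (fun _ => algebraMap (Polynomial k) (Localization (SPoly k)) Polynomial.X)
    (fun _ => 0))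

/-- `phiOne` kills the relations, hence descends to `A₁`. -/
noncomputable def psiOne (k : Type) [Field k] : AOne k →+* Localization (SPoly k) :=
  Ideal.Quotient.lift _ (phiOne k).toRingHom
    (by
      intro p hp
      have hle : Ideal.span (Set.range fun i : ℕ =>
          (X (Sum.inl ()) - (i : MvPolynomial (Unit ⊕ ℕ) k)) * X (Sum.inr i)) ≤
          RingHom.ker (phiOne k).toRingHom := by
        rw [Ideal.span_le]
        rintro q ⟨i, rfl⟩
        simp [RingHom.mem_ker, phiOne]
      exact hle hp)

lemma psiOne_mk (k : Type) [Field k] (p : MvPolynomial (Unit ⊕ ℕ) k) :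
    psiOne k (Ideal.Quotient.mk _ p) = phiOne k p := rfl

lemma psiOne_b (k : Type) [Field k] :
    psiOne k (bOne k) = algebraMap (Polynomial k) (Localization (SPoly k)) Polynomial.X := by
  simp [psiOne_mk, bOne, phiOne]

lemma psiOne_a (k : Type) [Field k] (i : ℕ) : psiOne k (aOne k i) = 0 := by
  simp [psiOne_mk, aOne, phiOne]

lemma polyToAOne_X (k : Type) [Field k] : polyToAOne k Polynomial.X = bOne k := by
  simp [polyToAOne]

lemma aOne_loc_zero (k : Type) [Field k] (i : ℕ) :
    algebraMap (AOne k) (Localization (SOne k)) (aOne k i) = 0 := by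
  have hz : (bOne k - (i : AOne k)) * aOne k i = 0 := by
    have hm : ((X (Sum.inl ()) - (i : MvPolynomial (Unit ⊕ ℕ) k)) * X (Sum.inr i)) ∈
        Ideal.span (Set.range fun i : ℕ =>
          (X (Sum.inl ()) - (i : MvPolynomial (Unit ⊕ ℕ) k)) * X (Sum.inr i)) :=
      Ideal.subset_span ⟨i, rfl⟩
    have h := (Ideal.Quotient.eq_zero_iff_mem).mpr hm
    rw [map_mul, map_sub, map_natCast] at h
    exact h
  have hu : IsUnit (algebraMap (AOne k) (Localization (SOne k)) (bOne k - (i : AOne k))) :=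
    IsLocalization.map_units (S := Localization (SOne k)) (M := SOne k)
      (⟨_, Submonoid.subset_closure ⟨i, rfl⟩⟩ : SOne k)
  have h2 : algebraMap (AOne k) (Localization (SOne k)) (bOne k - (i : AOne k)) *
      algebraMap (AOne k) (Localization (SOne k)) (aOne k i) = 0 := by
    rw [← map_mul, hz, map_zero]
  exact (hu.mul_right_eq_zero).mp h2

lemma psiOne_sub_natCast (k : Type) [Field k] (m : ℕ) :
    psiOne k (bOne k - (m : AOne k)) =
      algebraMap (Polynomial k) (Localization (SPoly k))
        (Polynomial.X - (m : Polynomial k)) := by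
  have e : bOne k - (m : AOne k) =
      Ideal.Quotient.mk _ (X (Sum.inl ()) - (m : MvPolynomial (Unit ⊕ ℕ) k)) := by
    rw [bOne, map_sub, map_natCast]
  rw [e, psiOne_mk]
  simp [phiOne]

/-- in the localization `S⁻¹A₁` the image of every `a_i` is zero, and the
natural map from the localization of `k[b]` at the multiplicative set generated by
`{b − m : m ∈ ℕ}` to `S⁻¹A₁` is an isomorphism. -/
theorem aOne_localization (k : Type) [Field k] [CharZero k] :
    (∀ i : ℕ, algebraMap (AOne k) (Localization (SOne k)) (aOne k i) = 0) ∧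
    Function.Bijective
      (IsLocalization.map (M := SPoly k) (T := SOne k)
        (Localization (SOne k)) (polyToAOne k)
        (by
          refine Submonoid.closure_le.mpr ?_
          rintro x ⟨m, rfl⟩
          have h : polyToAOne k (Polynomial.X - (m : Polynomial k)) =
              bOne k - (m : AOne k) := by
            simp [polyToAOne]
          exact Submonoid.mem_comap.mpr (h ▸ Submonoid.subset_closure ⟨m, rfl⟩)) :
        Localization (SPoly k) →+* Localization (SOne k)) := by
  refine ⟨aOne_loc_zero k, ?_⟩
  set F := (IsLocalization.map (M := SPoly k) (T := SOne k)
        (Localization (SOne k)) (polyToAOne k)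
        (by
          refine Submonoid.closure_le.mpr ?_
          rintro x ⟨m, rfl⟩
          have h : polyToAOne k (Polynomial.X - (m : Polynomial k)) =
              bOne k - (m : AOne k) := by
            simp [polyToAOne]
          exact Submonoid.mem_comap.mpr (h ▸ Submonoid.subset_closure ⟨m, rfl⟩)) :
        Localization (SPoly k) →+* Localization (SOne k)) with hF
  have hmap : ∀ p : Polynomial k,
      F (algebraMap (Polynomial k) (Localization (SPoly k)) p) =
      algebraMap (AOne k) (Localization (SOne k)) (polyToAOne k p) := by
    intro p
    rw [hF]
    exact IsLocalization.map_eq _ p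
  have hunit : ∀ s : SOne k, IsUnit (psiOne k s) := by
    rintro ⟨s, hs⟩
    induction hs using Submonoid.closure_induction with
    | mem x hx =>
      obtain ⟨m, rfl⟩ := hx
      rw [psiOne_sub_natCast]
      exact IsLocalization.map_units _ (⟨_, Submonoid.subset_closure ⟨m, rfl⟩⟩ : SPoly k)
    | one => simp
    | mul x y _ _ hx hy => rw [map_mul]; exact hx.mul hy
  set χ := IsLocalization.lift (M := SOne k) (S := Localization (SOne k)) hunit with hχ
  have hψp : ∀ p : Polynomial k, psiOne k (polyToAOne k p) =
      algebraMap (Polynomial k) (Localization (SPoly k)) p := by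
    intro p
    have hcomp : (psiOne k).comp (polyToAOne k) =
        algebraMap (Polynomial k) (Localization (SPoly k)) := by
      apply Polynomial.ringHom_ext
      · intro a
        show psiOne k (polyToAOne k (Polynomial.C a)) = _
        rw [show polyToAOne k (Polynomial.C a) = algebraMap k (AOne k) a by
          simp [polyToAOne]]
        have hR : (algebraMap (Polynomial k) (Localization (SPoly k))) (Polynomial.C a) =
            algebraMap k (Localization (SPoly k)) a := by
          rw [show Polynomial.C a = algebraMap k (Polynomial k) a from rfl,
            ← IsScalarTower.algebraMap_apply]
        rw [hR, IsScalarTower.algebraMap_apply k (MvPolynomial (Unit ⊕ ℕ) k) (AOne k),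
          Ideal.Quotient.algebraMap_eq, psiOne_mk]
        simp [phiOne, MvPolynomial.algebraMap_eq, aeval_C]
      · show psiOne k (polyToAOne k Polynomial.X) = _
        rw [polyToAOne_X, psiOne_b]
    exact RingHom.congr_fun hcomp p
  have hl : χ.comp F = RingHom.id _ := by
    apply IsLocalization.ringHom_ext (SPoly k)
    apply RingHom.ext
    intro p
    simp only [RingHom.comp_apply, RingHom.id_apply]
    rw [hmap, hχ, IsLocalization.lift_eq, hψp]
  have hl' : ∀ x, χ (F x) = x := by
    intro x
    have h := RingHom.congr_fun hl x
    simpa only [RingHom.comp_apply, RingHom.id_apply] using h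
  have hr : F.comp χ = RingHom.id _ := by
    apply IsLocalization.ringHom_ext (SOne k)
    have key : ((F.comp χ).comp (algebraMap (AOne k) (Localization (SOne k)))).comp
        (Ideal.Quotient.mk _ : MvPolynomial (Unit ⊕ ℕ) k →+* AOne k) =
        ((algebraMap (AOne k) (Localization (SOne k)))).comp
        (Ideal.Quotient.mk _ : MvPolynomial (Unit ⊕ ℕ) k →+* AOne k) := by
      apply MvPolynomial.ringHom_ext
      · intro a
        simp only [RingHom.comp_apply]
        rw [show (Ideal.Quotient.mk _ (C a) : AOne k) = polyToAOne k (Polynomial.C a) by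
          simp [polyToAOne, IsScalarTower.algebraMap_apply k (MvPolynomial (Unit ⊕ ℕ) k) (AOne k),
            MvPolynomial.algebraMap_eq]]
        rw [← hmap, hl']
      · rintro (⟨⟩ | i)
        · simp only [RingHom.comp_apply]
          rw [show (Ideal.Quotient.mk _ (X (Sum.inl ())) : AOne k) = polyToAOne k Polynomial.X from
            (polyToAOne_X k).symm]
          rw [← hmap, hl']
        · simp only [RingHom.comp_apply]
          rw [show (Ideal.Quotient.mk _ (X (Sum.inr i)) : AOne k) = aOne k i from rfl]
          rw [aOne_loc_zero, map_zero, map_zero]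
    apply RingHom.ext
    intro a
    obtain ⟨q, rfl⟩ := Ideal.Quotient.mk_surjective a
    exact RingHom.congr_fun key q
  refine ⟨?_, ?_⟩
  · intro x y hxy
    rw [← hl' x, ← hl' y, hxy]
  · intro y
    refine ⟨χ y, ?_⟩
    have h := RingHom.congr_fun hr y
    simpa only [RingHom.comp_apply, RingHom.id_apply] using h
end

section
/- Let A be a commutative ring containing the rationals ℚ. The map Φ from the group of units of the formal power series ring A⟦t⟧ to A⟦t⟧ × Aˣ given by Φ(f) = (f′ · f^{−1}, constant coefficient of f), where f′ denotes the formal derivative, is a group isomorphism from the multiplicative group (A⟦t⟧)ˣ onto the product of the additive group (A⟦t⟧, +) with the multiplicative group Aˣ. (This is the isomorphism L⁺𝔾ₘ ≅ L⁺𝔸¹dt × 𝔾ₘ given by (dlog, ev), which is the content of Proposition 2.7 on the moduli of logarithmic rank 1 local systems.) -/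
open PowerSeries

noncomputable section DlogAux

variable {A : Type} [CommRing A] [Algebra ℚ A]

/-- Coefficients of the solution of `f' = g * f`, `f 0 = a`. -/
noncomputable def dlogSolCoeff (g : PowerSeries A) (a : A) : ℕ → A
  | 0 => a
  | n + 1 =>
      algebraMap ℚ A ((n + 1 : ℚ)⁻¹) *
        ∑ i ∈ Finset.range (n + 1), coeff i g * dlogSolCoeff g a (n - i)

lemma coeff_derivativeFun_aux (f : PowerSeries A) (n : ℕ) :
    coeff n (derivativeFun f) = coeff (n + 1) f * (n + 1) := coeff_derivative f n

lemma dlogSol_deriv (g : PowerSeries A) (a : A) :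
    derivativeFun (mk (dlogSolCoeff g a)) = g * mk (dlogSolCoeff g a) := by
  ext n
  rw [coeff_derivativeFun_aux, coeff_mk, dlogSolCoeff, PowerSeries.coeff_mul]
  rw [Finset.Nat.sum_antidiagonal_eq_sum_range_succ (f := fun i j =>
    coeff i g * coeff j (mk (dlogSolCoeff g a)))]
  simp only [coeff_mk]
  rw [mul_assoc]
  have h1 : ((n : A) + 1) = algebraMap ℚ A ((n : ℚ) + 1) := by
    push_cast; simp
  rw [mul_comm (∑ i ∈ Finset.range (n + 1), coeff i g * dlogSolCoeff g a (n - i)), ← mul_assoc,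
    h1, ← map_mul]
  have h2 : ((n : ℚ) + 1)⁻¹ * ((n : ℚ) + 1) = 1 := by
    field_simp
  rw [h2, map_one, one_mul]

lemma dlog_injective_aux (f : PowerSeries A)
    (hd : derivativeFun f = 0) (hc : constantCoeff f = 1) : f = 1 := by
  ext n
  cases n with
  | zero => simpa using hc
  | succ n =>
    have h := congrArg (coeff n) hd
    rw [coeff_derivativeFun_aux, map_zero] at h
    have h1 : ((n : A) + 1) = algebraMap ℚ A ((n : ℚ) + 1) := by push_cast; simp
    have h2 : coeff (n + 1) f = 0 := by
      have := congrArg (fun x => x * algebraMap ℚ A ((n : ℚ) + 1)⁻¹) h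
      simp only [zero_mul] at this
      rwa [mul_assoc, h1, ← map_mul, mul_inv_cancel₀ (by positivity), map_one, mul_one] at this
    rw [h2]
    simp

end DlogAux

/-- for a commutative ring `A` containing `ℚ`, the map
`Φ : (A⟦t⟧)ˣ → A⟦t⟧ × Aˣ`, `Φ(f) = (f′·f⁻¹, constant coefficient of f)`, is a group
isomorphism from the multiplicative group of units of `A⟦t⟧` onto the product of the
additive group `(A⟦t⟧, +)` with the multiplicative group `Aˣ`.  This is the isomorphism
`L⁺𝔾ₘ ≅ L⁺𝔸¹dt × 𝔾ₘ` given by `(dlog, ev)`. -/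
theorem dlog_ev_mulEquiv (A : Type) [CommRing A] [Algebra ℚ A] :
    ∃ Φ : (PowerSeries A)ˣ ≃* Multiplicative (PowerSeries A) × Aˣ,
      ∀ f : (PowerSeries A)ˣ,
        Φ f =
          (Multiplicative.ofAdd
              (PowerSeries.derivativeFun (f : PowerSeries A) *
                ((f⁻¹ : (PowerSeries A)ˣ) : PowerSeries A)),
            Units.map (PowerSeries.constantCoeff : PowerSeries A →+* A).toMonoidHom f) := by
  set Φ₀ : (PowerSeries A)ˣ →* Multiplicative (PowerSeries A) × Aˣ :=
    { toFun := fun f =>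
        (Multiplicative.ofAdd
            (PowerSeries.derivativeFun (f : PowerSeries A) *
              ((f⁻¹ : (PowerSeries A)ˣ) : PowerSeries A)),
          Units.map (PowerSeries.constantCoeff : PowerSeries A →+* A).toMonoidHom f)
      map_one' := by
        simp [derivativeFun_one]
      map_mul' := by
        intro f g
        refine Prod.ext ?_ (Units.ext ?_)
        · show Multiplicative.ofAdd _ = Multiplicative.ofAdd _ * Multiplicative.ofAdd _
          rw [← ofAdd_add]
          congr 1
          have hfg : ((f * g)⁻¹ : (PowerSeries A)ˣ).val
              = (f⁻¹ : (PowerSeries A)ˣ).val * (g⁻¹ : (PowerSeries A)ˣ).val := by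
            rw [mul_inv_rev, Units.val_mul, mul_comm]
          have hf : (f : PowerSeries A) * ((f⁻¹ : (PowerSeries A)ˣ) : PowerSeries A) = 1 := by
            rw [← Units.val_mul, mul_inv_cancel, Units.val_one]
          have hg : (g : PowerSeries A) * ((g⁻¹ : (PowerSeries A)ˣ) : PowerSeries A) = 1 := by
            rw [← Units.val_mul, mul_inv_cancel, Units.val_one]
          rw [Units.val_mul, derivativeFun_mul, hfg, smul_eq_mul, smul_eq_mul]
          have key : ((f : PowerSeries A) * derivativeFun (g : PowerSeries A)
                + (g : PowerSeries A) * derivativeFun (f : PowerSeries A))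
                * ((f⁻¹ : (PowerSeries A)ˣ).val * (g⁻¹ : (PowerSeries A)ˣ).val)
              = ((f : PowerSeries A) * (f⁻¹ : (PowerSeries A)ˣ).val)
                  * (derivativeFun (g : PowerSeries A) * (g⁻¹ : (PowerSeries A)ˣ).val)
                + ((g : PowerSeries A) * (g⁻¹ : (PowerSeries A)ˣ).val)
                  * (derivativeFun (f : PowerSeries A) * (f⁻¹ : (PowerSeries A)ˣ).val) := by
            ring
          rw [key, hf, hg, one_mul, one_mul, add_comm]
        · simp
      }
  have hbij : Function.Bijective Φ₀ := by
    constructor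
    · intro f g hfg
      have h1 : derivativeFun (f : PowerSeries A) * ((f⁻¹ : (PowerSeries A)ˣ) : PowerSeries A)
          = derivativeFun (g : PowerSeries A) * ((g⁻¹ : (PowerSeries A)ˣ) : PowerSeries A) := by
        have := congrArg Prod.fst hfg
        exact congrArg Multiplicative.toAdd this
      have h2 : constantCoeff (f : PowerSeries A) = constantCoeff (g : PowerSeries A) := by
        have := congrArg Prod.snd hfg
        exact congrArg Units.val this
      -- consider h := f * g⁻¹ : show it is 1
      have key : (f * g⁻¹ : (PowerSeries A)ˣ).val = 1 := by
        apply dlog_injective_aux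
        · have hval : (f * g⁻¹ : (PowerSeries A)ˣ).val
              = (f : PowerSeries A) * ((g⁻¹ : (PowerSeries A)ˣ) : PowerSeries A) := rfl
          rw [hval, derivativeFun_mul, smul_eq_mul, smul_eq_mul]
          have dginv : derivativeFun ((g⁻¹ : (PowerSeries A)ˣ) : PowerSeries A)
              = -(((g⁻¹ : (PowerSeries A)ˣ) : PowerSeries A)) ^ 2
                * derivativeFun (g : PowerSeries A) := PowerSeries.derivative_inv g
          rw [dginv]
          have hg : (g : PowerSeries A) * ((g⁻¹ : (PowerSeries A)ˣ) : PowerSeries A) = 1 := by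
            rw [← Units.val_mul, mul_inv_cancel, Units.val_one]
          have hf : (f : PowerSeries A) * ((f⁻¹ : (PowerSeries A)ˣ) : PowerSeries A) = 1 := by
            rw [← Units.val_mul, mul_inv_cancel, Units.val_one]
          have h1' : derivativeFun (f : PowerSeries A)
              = derivativeFun (g : PowerSeries A)
                * ((g⁻¹ : (PowerSeries A)ˣ) : PowerSeries A) * (f : PowerSeries A) := by
            calc derivativeFun (f : PowerSeries A)
                = derivativeFun (f : PowerSeries A)
                  * (((f⁻¹ : (PowerSeries A)ˣ) : PowerSeries A) * (f : PowerSeries A)) := by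
                  rw [mul_comm ((f⁻¹ : (PowerSeries A)ˣ) : PowerSeries A), hf, mul_one]
              _ = (derivativeFun (f : PowerSeries A)
                    * ((f⁻¹ : (PowerSeries A)ˣ) : PowerSeries A)) * (f : PowerSeries A) := by ring
              _ = derivativeFun (g : PowerSeries A)
                    * ((g⁻¹ : (PowerSeries A)ˣ) : PowerSeries A) * (f : PowerSeries A) := by
                  rw [h1]
          rw [h1']
          ring
        · show constantCoeff ((f * g⁻¹ : (PowerSeries A)ˣ).val) = 1
          have hval : (f * g⁻¹ : (PowerSeries A)ˣ).val
              = (f : PowerSeries A) * ((g⁻¹ : (PowerSeries A)ˣ) : PowerSeries A) := rfl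
          rw [hval, map_mul, h2, ← map_mul, ← Units.val_mul, mul_inv_cancel, Units.val_one,
            map_one]
      have : f * g⁻¹ = 1 := Units.ext key
      calc f = (f * g⁻¹) * g := by group
        _ = 1 * g := by rw [this]
        _ = g := one_mul g
    · rintro ⟨gm, a⟩
      set g : PowerSeries A := Multiplicative.toAdd gm with hg
      set fs : PowerSeries A := PowerSeries.mk (dlogSolCoeff g (a : A)) with hfs
      have hconst : constantCoeff fs = (a : A) := by
        rw [hfs, ← coeff_zero_eq_constantCoeff, coeff_mk, dlogSolCoeff]
      have hunit : IsUnit fs := by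
        rw [PowerSeries.isUnit_iff_constantCoeff, hconst]
        exact a.isUnit
      obtain ⟨u, hu⟩ := hunit
      refine ⟨u, ?_⟩
      have hderiv : derivativeFun fs = g * fs := dlogSol_deriv g (a : A)
      have huinv : fs * ((u⁻¹ : (PowerSeries A)ˣ) : PowerSeries A) = 1 := by
        rw [← hu, ← Units.val_mul, mul_inv_cancel, Units.val_one]
      refine Prod.ext ?_ (Units.ext ?_)
      · show Multiplicative.ofAdd _ = gm
        rw [hu, hderiv]
        rw [mul_assoc, huinv, mul_one]
        rfl
      · show constantCoeff (u : PowerSeries A) = (a : A)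
        rw [hu, hconst]
  refine ⟨MulEquiv.ofBijective Φ₀ hbij, fun f => rfl⟩
end

section
/- Let A be a commutative ring containing the rationals ℚ, let y ∈ A be a nilpotent element, and let f ∈ A⟦t⟧ be a formal power series satisfying t·f′ = y·f, where f′ is the formal derivative. Then f is constant, i.e. f equals the constant power series with value its constant coefficient a₀, and moreover y·a₀ = 0. (This computation, showing that a flat section of the connection d − y·dt/t over a nilpotent thickening is a constant killed by y, is the content of the proof of Lemma 6.3, identifying the formal completion of Y along Z^{≤0} with the formal completion of C/𝔾ₘ along the x-axis.) -/
/-- let `A` be a commutative ring containing `ℚ`, `y ∈ A` nilpotent, and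
`f ∈ A⟦t⟧` a formal power series with `t·f′ = y·f` (where `f′` is the formal derivative).
Then `f` is constant, equal to the constant power series on its constant coefficient `a₀`,
and moreover `y·a₀ = 0`. -/
theorem flat_section_of_nilpotent_residue (A : Type) [CommRing A] [Algebra ℚ A]
    (y : A) (hy : IsNilpotent y) (f : PowerSeries A)
    (hf : PowerSeries.X * PowerSeries.derivativeFun f = PowerSeries.C y * f) :
    f = PowerSeries.C (PowerSeries.constantCoeff f) ∧
      y * PowerSeries.constantCoeff f = 0 := by
  constructor
  · ext n
    cases n with
    | zero => simp
    | succ n =>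
      have h := congrArg (PowerSeries.coeff (n + 1)) hf
      rw [PowerSeries.coeff_succ_X_mul, (show PowerSeries.coeff n f.derivativeFun = PowerSeries.coeff (n + 1) f * (n + 1) from PowerSeries.coeff_derivative f n),
        PowerSeries.coeff_C_mul] at h
      have hu : IsUnit ((-y) + ((n : A) + 1)) := by
        refine IsNilpotent.isUnit_add_right_of_commute hy.neg ?_ (Commute.all _ _)
        have : ((n : A) + 1) = algebraMap ℚ A ((n : ℚ) + 1) := by push_cast; ring
        rw [this]
        exact (isUnit_iff_ne_zero.mpr (by positivity)).map (algebraMap ℚ A)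
      have h2 : ((-y) + ((n : A) + 1)) * PowerSeries.coeff (n + 1) f = 0 := by
        linear_combination h
      simpa using (hu.mul_right_eq_zero).mp h2
  · have h := congrArg (PowerSeries.coeff 0) hf
    simpa using h.symm
end
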